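/- Let d, M, N be positive integers with N ≥ M and N + M = 4d. If N ≠ M and (2d − M) does not divide d, then there exists a nonnegative integer r such that (2r+1)d > max(rN, (r+1)M). Specifically, taking r to be the nearest integer to M/(N−M) works. -/

import Mathlib

theorem stmt_4 (d M N : ℕ) (hd : 0 < d) (hM : 0 < M) (hN : 0 < N)
    (hMN : M ≤ N) (hsum : N + M = 4 * d) (hne : N ≠ M)
    (hndvd : ¬ (2 * d - M) ∣ d) :
    ∃ r : ℕ, (2 * r + 1) * d > max (r * N) ((r + 1) * M) ∧
      (r : ℤ) = round ((M : ℚ) / ((N : ℚ) - (M : ℚ))) := by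
  have hM2d : M < 2 * d := by omega
  set k := 2 * d - M with hk
  have hk0 : 0 < k := by omega
  have hNk : N = 2 * d + k := by omega
  have hMk : M + k = 2 * d := by omega
  set r := d / k with hr
  have hdm := Nat.div_add_mod d k
  have hmod : d % k ≠ 0 := fun h => hndvd (Nat.dvd_of_mod_eq_zero h)
  have hmlt : d % k < k := Nat.mod_lt _ hk0
  have hc : r * k = k * (d / k) := by rw [hr, Nat.mul_comm]
  have h1 : r * k < d := by omega
  have h2 : d < (r + 1) * k := by
    have he : (r + 1) * k = r * k + k := by ring
    omega
  refine ⟨r, ?_, ?_⟩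
  · rw [gt_iff_lt, max_lt_iff]
    constructor <;> nlinarith
  · have hQ : (M : ℚ) / ((N : ℚ) - (M : ℚ)) = (d : ℚ) / (k : ℚ) - 1 / 2 := by
      have hk0' : (k : ℚ) ≠ 0 := by exact_mod_cast hk0.ne'
      have hM' : (M : ℚ) = 2 * d - k := by
        have : (M : ℚ) + k = 2 * d := by exact_mod_cast hMk
        linarith
      have hN' : (N : ℚ) = 2 * d + k := by exact_mod_cast hNk
      rw [hM', hN']
      field_simp
      linear_combination (2 * (d : ℚ) - k) * mul_inv_cancel₀ hk0'
    rw [hQ, round_eq]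
    have : (d : ℚ) / (k : ℚ) - 1 / 2 + 1 / 2 = (d : ℚ) / (k : ℚ) := by ring
    rw [this]
    rw [show ((d : ℚ) / (k : ℚ)) = ((d : ℤ) : ℚ) / ((k : ℕ) : ℚ) by push_cast; ring,
      Rat.floor_intCast_div_natCast]
    exact_mod_cast (Int.natCast_div d k).symm
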